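/- For any two N×p complex matrices A and B, the supremum norm of the difference of the cumulative distribution functions of the empirical spectral measures of AA* and BB* is at most rank(A−B)/N. -/

import Mathlib

open Matrix

variable {N : ℕ} {H : Matrix (Fin N) (Fin N) ℂ} (hH : H.IsHermitian)

lemma repr_toEuclideanLin (v : EuclideanSpace ℂ (Fin N)) (i : Fin N) :
    hH.eigenvectorBasis.repr (toEuclideanLin H v) i
      = (hH.eigenvalues i : ℂ) * hH.eigenvectorBasis.repr v i := by
  rw [OrthonormalBasis.repr_apply_apply, OrthonormalBasis.repr_apply_apply]
  have hsym := (Matrix.isHermitian_iff_isSymmetric.mp hH)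
  rw [← hsym (hH.eigenvectorBasis i) v]
  have h1 : toEuclideanLin H (hH.eigenvectorBasis i) = (hH.eigenvalues i : ℂ) • hH.eigenvectorBasis i := by
    have h2 := hH.mulVec_eigenvectorBasis i
    rw [toEuclideanLin_apply]
    apply (WithLp.equiv 2 (Fin N → ℂ)).injective
    simp only [Equiv.apply_symm_apply, WithLp.equiv_apply, WithLp.ofLp_toLp]
    ext j
    have := congrFun h2 j
    simpa using this
  rw [h1, inner_smul_left]
  simp [Complex.conj_ofReal]

lemma qf_eq (v : EuclideanSpace ℂ (Fin N)) :
    Complex.re (inner ℂ v (toEuclideanLin H v) : ℂ)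
      = ∑ i, hH.eigenvalues i * ‖hH.eigenvectorBasis.repr v i‖ ^ 2 := by
  rw [← hH.eigenvectorBasis.repr.inner_map_map v (toEuclideanLin H v)]
  rw [PiLp.inner_apply]
  rw [Complex.re_sum]
  refine Finset.sum_congr rfl fun i _ => ?_
  rw [repr_toEuclideanLin]
  simp only [RCLike.inner_apply]
  rw [show (hH.eigenvalues i : ℂ) * hH.eigenvectorBasis.repr v i * (starRingEnd ℂ) (hH.eigenvectorBasis.repr v i) = (hH.eigenvalues i : ℂ) * ((starRingEnd ℂ) (hH.eigenvectorBasis.repr v i) * hH.eigenvectorBasis.repr v i) by ring]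
  rw [Complex.conj_mul']
  simp [← Complex.ofReal_pow, ← Complex.ofReal_mul]

lemma norm_sq_eq (v : EuclideanSpace ℂ (Fin N)) :
    ‖v‖ ^ 2 = ∑ i, ‖hH.eigenvectorBasis.repr v i‖ ^ 2 := by
  rw [← hH.eigenvectorBasis.repr.norm_map v]
  rw [EuclideanSpace.norm_eq]
  rw [Real.sq_sqrt (by positivity)]

/-- coordinate restriction map w.r.t. the eigenbasis -/
noncomputable def coordMap (P : Fin N → Prop) [DecidablePred P] :
    EuclideanSpace ℂ (Fin N) →ₗ[ℂ] ({i // P i} → ℂ) where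
  toFun v i := hH.eigenvectorBasis.repr v i.1
  map_add' u v := by ext i; simp
  map_smul' c v := by ext i; simp

lemma finrank_le_count {x : ℝ} (S : Submodule ℂ (EuclideanSpace ℂ (Fin N)))
    (hS : ∀ v ∈ S, Complex.re (inner ℂ v (toEuclideanLin H v) : ℂ) ≤ x * ‖v‖ ^ 2) :
    Module.finrank ℂ S ≤ (Finset.univ.filter fun i => hH.eigenvalues i ≤ x).card := by
  classical
  have hinj : Function.Injective ((coordMap hH (fun i => hH.eigenvalues i ≤ x)).domRestrict S) := by
    rw [← LinearMap.ker_eq_bot, LinearMap.ker_eq_bot']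
    rintro ⟨v, hv⟩ hφ
    have hzero : ∀ i, hH.eigenvalues i ≤ x → hH.eigenvectorBasis.repr v i = 0 := by
      intro i hi
      have := congrFun hφ ⟨i, hi⟩
      simpa [coordMap] using this
    have hsum : ∑ i, (hH.eigenvalues i - x) * ‖hH.eigenvectorBasis.repr v i‖ ^ 2 ≤ 0 := by
      have h1 := hS v hv
      rw [qf_eq hH, norm_sq_eq hH v, Finset.mul_sum] at h1
      rw [← sub_nonpos] at h1
      rw [← Finset.sum_sub_distrib] at h1
      calc ∑ i, (hH.eigenvalues i - x) * ‖hH.eigenvectorBasis.repr v i‖ ^ 2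
          = ∑ i, (hH.eigenvalues i * ‖hH.eigenvectorBasis.repr v i‖ ^ 2 - x * ‖hH.eigenvectorBasis.repr v i‖ ^ 2) := by
            refine Finset.sum_congr rfl fun i _ => by ring
        _ ≤ 0 := h1
    have hterm : ∀ i ∈ Finset.univ, 0 ≤ (hH.eigenvalues i - x) * ‖hH.eigenvectorBasis.repr v i‖ ^ 2 := by
      intro i _
      by_cases hi : hH.eigenvalues i ≤ x
      · rw [hzero i hi]; simp
      · have : 0 < hH.eigenvalues i - x := by linarith [not_le.mp hi]
        positivity
    have hall : ∀ i ∈ Finset.univ, (hH.eigenvalues i - x) * ‖hH.eigenvectorBasis.repr v i‖ ^ 2 = 0 :=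
      (Finset.sum_eq_zero_iff_of_nonneg hterm).mp (le_antisymm hsum (Finset.sum_nonneg hterm))
    have hv0 : v = 0 := by
      have : hH.eigenvectorBasis.repr v = 0 := by
        ext i
        by_cases hi : hH.eigenvalues i ≤ x
        · simpa using hzero i hi
        · have h := hall i (Finset.mem_univ i)
          have hpos : 0 < hH.eigenvalues i - x := by linarith [not_le.mp hi]
          have : ‖hH.eigenvectorBasis.repr v i‖ ^ 2 = 0 := by
            rcases mul_eq_zero.mp h with h' | h'
            · exact absurd h' (ne_of_gt hpos)
            · exact h'
          simpa using (pow_eq_zero_iff (two_ne_zero)).mp this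
      simpa using hH.eigenvectorBasis.repr.map_eq_zero_iff.mp this
    exact Subtype.ext hv0
  have := LinearMap.finrank_le_finrank_of_injective hinj
  rwa [Module.finrank_pi ℂ, Fintype.card_subtype] at this

open Classical in
/-- Span (as a kernel) of eigenvectors with eigenvalue ≤ x. -/
noncomputable def badKer (x : ℝ) : Submodule ℂ (EuclideanSpace ℂ (Fin N)) :=
  LinearMap.ker (coordMap hH (fun i => ¬ hH.eigenvalues i ≤ x))

open Classical in
lemma mem_badKer {x : ℝ} {v : EuclideanSpace ℂ (Fin N)} (hv : v ∈ badKer hH x)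
    (i : Fin N) (hi : ¬ hH.eigenvalues i ≤ x) : hH.eigenvectorBasis.repr v i = 0 := by
  have := congrFun (LinearMap.mem_ker.mp hv) ⟨i, hi⟩
  simpa [coordMap] using this

open Classical in
lemma count_le_finrank_badKer (x : ℝ) :
    (Finset.univ.filter fun i => hH.eigenvalues i ≤ x).card ≤ Module.finrank ℂ (badKer hH x) := by
  have h1 := LinearMap.finrank_range_add_finrank_ker (coordMap hH (fun i => ¬ hH.eigenvalues i ≤ x))
  have h2 : Module.finrank ℂ (LinearMap.range (coordMap hH (fun i => ¬ hH.eigenvalues i ≤ x)))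
      ≤ (Finset.univ.filter fun i => ¬ hH.eigenvalues i ≤ x).card := by
    have := Submodule.finrank_le (LinearMap.range (coordMap hH (fun i => ¬ hH.eigenvalues i ≤ x)))
    rwa [Module.finrank_pi ℂ, Fintype.card_subtype] at this
  have h3 : (Finset.univ.filter fun i => hH.eigenvalues i ≤ x).card
      + (Finset.univ.filter fun i => ¬ hH.eigenvalues i ≤ x).card = N := by
    rw [Finset.card_filter_add_card_filter_not]
    simp
  have h4 : Module.finrank ℂ (EuclideanSpace ℂ (Fin N)) = N := finrank_euclideanSpace_fin
  rw [h4] at h1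
  unfold badKer
  omega

lemma qf_badKer {x : ℝ} {v : EuclideanSpace ℂ (Fin N)} (hv : v ∈ badKer hH x) :
    Complex.re (inner ℂ v (toEuclideanLin H v) : ℂ) ≤ x * ‖v‖ ^ 2 := by
  rw [qf_eq hH, norm_sq_eq hH v, Finset.mul_sum]
  refine Finset.sum_le_sum fun i _ => ?_
  by_cases hi : hH.eigenvalues i ≤ x
  · have : (0:ℝ) ≤ ‖hH.eigenvectorBasis.repr v i‖ ^ 2 := by positivity
    nlinarith
  · rw [mem_badKer hH hv i hi]; simp

lemma qf_mul_conjTranspose {p : ℕ} (M : Matrix (Fin N) (Fin p) ℂ) (v : EuclideanSpace ℂ (Fin N)) :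
    (inner ℂ v (toEuclideanLin (M * Mᴴ) v) : ℂ)
      = dotProduct (star (Mᴴ *ᵥ (WithLp.equiv 2 (Fin N → ℂ) v))) (Mᴴ *ᵥ (WithLp.equiv 2 (Fin N → ℂ) v)) := by
  rw [EuclideanSpace.inner_eq_star_dotProduct]
  rw [dotProduct_comm, ofLp_toEuclideanLin_apply]
  rw [← mulVec_mulVec]
  rw [dotProduct_mulVec]
  congr 1
  rw [star_mulVec, conjTranspose_conjTranspose]
  rfl

lemma count_ineq {p : ℕ} (A B : Matrix (Fin N) (Fin p) ℂ) (x : ℝ) :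
    (Finset.univ.filter fun i => (Matrix.isHermitian_mul_conjTranspose_self B).eigenvalues i ≤ x).card
      ≤ (Finset.univ.filter fun i => (Matrix.isHermitian_mul_conjTranspose_self A).eigenvalues i ≤ x).card
        + (A - B).rank := by
  set hA := Matrix.isHermitian_mul_conjTranspose_self A with hAdef
  set hB := Matrix.isHermitian_mul_conjTranspose_self B with hBdef
  set e := (WithLp.linearEquiv 2 ℂ (Fin N → ℂ)) with edef
  set f : EuclideanSpace ℂ (Fin N) →ₗ[ℂ] (Fin p → ℂ) := ((A - B)ᴴ.mulVecLin).comp e.toLinearMap with fdef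
  set L := LinearMap.ker f with Ldef
  set S := badKer hB x ⊓ L with Sdef
  -- finrank of L
  have hrange : LinearMap.range f = LinearMap.range (A - B)ᴴ.mulVecLin := by
    rw [fdef, LinearMap.range_comp_of_range_eq_top]
    exact LinearEquiv.range e
  have hL : Module.finrank ℂ (LinearMap.range f) + Module.finrank ℂ L = N := by
    have := LinearMap.finrank_range_add_finrank_ker f
    rwa [finrank_euclideanSpace_fin] at this
  have hrank : Module.finrank ℂ (LinearMap.range f) = (A - B).rank := by
    open ComplexOrder in
    rw [hrange, ← Matrix.rank_conjTranspose (A - B)]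
    rfl
  -- S has small quadratic form for A Aᴴ
  have hSqf : ∀ v ∈ S, Complex.re (inner ℂ v (toEuclideanLin (A * Aᴴ) v) : ℂ) ≤ x * ‖v‖ ^ 2 := by
    intro v hv
    have hker : (A - B)ᴴ *ᵥ (WithLp.equiv 2 (Fin N → ℂ) v) = 0 := by
      have := LinearMap.mem_ker.mp hv.2
      simpa [fdef, edef, Matrix.mulVecLin_apply, sub_mulVec] using this
    have heq : Aᴴ *ᵥ (WithLp.equiv 2 (Fin N → ℂ) v) = Bᴴ *ᵥ (WithLp.equiv 2 (Fin N → ℂ) v) := by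
      rw [conjTranspose_sub, sub_mulVec] at hker
      linear_combination (norm := module) hker
    have h1 : (inner ℂ v (toEuclideanLin (A * Aᴴ) v) : ℂ) = inner ℂ v (toEuclideanLin (B * Bᴴ) v) := by
      rw [qf_mul_conjTranspose, qf_mul_conjTranspose, heq]
    rw [h1]
    exact qf_badKer hB hv.1
  have hS_le := finrank_le_count hA S hSqf
  -- dimension counting
  have hdim := Submodule.finrank_sup_add_finrank_inf_eq (badKer hB x) L
  rw [← Sdef] at hdim
  have hsup : Module.finrank ℂ ((badKer hB x) ⊔ L : Submodule ℂ (EuclideanSpace ℂ (Fin N))) ≤ N := by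
    have := Submodule.finrank_le ((badKer hB x) ⊔ L : Submodule ℂ (EuclideanSpace ℂ (Fin N)))
    rwa [finrank_euclideanSpace_fin] at this
  have hKB := count_le_finrank_badKer hB x
  rw [hrank] at hL
  have hL2 : (A - B).rank + Module.finrank ℂ L = N := hL
  clear hL
  omega

/-- Empirical spectral CDF of a Hermitian matrix. -/
noncomputable def espCDF {N : ℕ} {A : Matrix (Fin N) (Fin N) ℂ}
    (hA : A.IsHermitian) (x : ℝ) : ℝ :=
  ((Finset.univ.filter fun i => hA.eigenvalues i ≤ x).card : ℝ) / N

/-- Rank inequality for CDFs of empirical spectral measures of A Aᴴ and B Bᴴ. -/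
theorem stmt_1 (N p : ℕ) (hN : 0 < N) (A B : Matrix (Fin N) (Fin p) ℂ) :
    (⨆ x : ℝ, |espCDF (Matrix.isHermitian_mul_conjTranspose_self A) x -
      espCDF (Matrix.isHermitian_mul_conjTranspose_self B) x|)
      ≤ ((A - B).rank : ℝ) / N := by
  apply ciSup_le
  intro x
  rw [espCDF, espCDF]
  have hN' : (0:ℝ) < N := by exact_mod_cast hN
  have h1 := count_ineq A B x
  have h2 := count_ineq B A x
  have hr : (B - A).rank = (A - B).rank := by
    rw [(neg_sub A B).symm]
    have hrangeq : LinearMap.range (-(A - B)).mulVecLin = LinearMap.range (A - B).mulVecLin := by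
      ext u
      simp only [LinearMap.mem_range, Matrix.mulVecLin_apply, Matrix.neg_mulVec]
      constructor
      · rintro ⟨v, rfl⟩
        exact ⟨-v, by simp [Matrix.mulVec_neg]⟩
      · rintro ⟨v, rfl⟩
        exact ⟨-v, by simp [Matrix.mulVec_neg]⟩
    unfold Matrix.rank
    rw [hrangeq]
  rw [hr] at h2
  rw [div_sub_div_same, abs_div, abs_of_pos hN']
  gcongr
  have h1' := (Nat.cast_le (α := ℝ)).mpr h1
  have h2' := (Nat.cast_le (α := ℝ)).mpr h2
  push_cast at h1' h2'
  rw [abs_sub_le_iff]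
  exact ⟨by linarith, by linarith⟩
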